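/- Let μ₁ > 0 and μ₂ be real numbers with μ = μ₁ + μ₂ satisfying 4/3 < μ₁/μ < 2, and define P : ℝ → ℝ by P(c) = 2μ₁((1 + c³)^{1/3} + (1/4)(1 + c³)^{−2/3}) + 4μ₂(1 + c³)^{1/3}. Then P'(c) < 0 for every c > 0 with c³ < (3μ₁ − 4μ)/(2(2μ − μ₁)); in particular there exists δ > 0 such that P'(c) < 0 for all c ∈ (0, δ), so the cavitation bifurcation is subcritical (unstable snap cavitation) even though the Baker–Ericksen inequalities hold. -/

import Mathlib

open Real MeasureTheory Set Filter

/-- Subcritical (unstable snap) cavitation for the two-term model: if μ₁ > 0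
and 4/3 < μ₁/μ < 2 (so the Baker–Ericksen inequalities hold), then the dead
load P(c) has negative derivative for all c > 0 with
c³ < (3μ₁ − 4μ)/(2(2μ − μ₁)); in particular P′ < 0 on some interval (0, δ). -/
theorem snap_cavitation (μ₁ μ₂ μ : ℝ) (hμ : μ = μ₁ + μ₂) (hμ₁ : 0 < μ₁)
    (hratio1 : 4 / 3 < μ₁ / μ) (hratio2 : μ₁ / μ < 2) (P : ℝ → ℝ)
    (hP : ∀ c : ℝ, P c = 2 * μ₁ * ((1 + c ^ 3) ^ ((1 : ℝ) / 3)
        + (1 / 4) * (1 + c ^ 3) ^ (-(2 : ℝ) / 3))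
        + 4 * μ₂ * (1 + c ^ 3) ^ ((1 : ℝ) / 3)) :
    (∀ c : ℝ, 0 < c → c ^ 3 < (3 * μ₁ - 4 * μ) / (2 * (2 * μ - μ₁)) →
      deriv P c < 0) ∧
    ∃ δ > 0, ∀ c ∈ Ioo (0 : ℝ) δ, deriv P c < 0 := by
  have hμpos : 0 < μ := by
    by_contra h
    push_neg at h
    have : μ₁ / μ ≤ 0 := div_nonpos_iff.mpr (Or.inl ⟨hμ₁.le, h⟩)
    linarith
  have hd : 0 < 2 * μ - μ₁ := by
    have := (div_lt_iff₀ hμpos).mp hratio2; linarith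
  have hn : 0 < 3 * μ₁ - 4 * μ := by
    have := (lt_div_iff₀ hμpos).mp hratio1; linarith
  have main : ∀ c : ℝ, 0 < c → c ^ 3 < (3 * μ₁ - 4 * μ) / (2 * (2 * μ - μ₁)) →
      deriv P c < 0 := by
    intro c hc hc3
    have hu : (0 : ℝ) < 1 + c ^ 3 := by positivity
    have hg : HasDerivAt (fun x : ℝ => 1 + x ^ 3) (3 * c ^ 2) c := by
      simpa using ((hasDerivAt_pow 3 c).const_add 1)
    have hA := hg.rpow_const (p := (1 : ℝ) / 3) (Or.inl hu.ne')
    have hB := hg.rpow_const (p := -(2 : ℝ) / 3) (Or.inl hu.ne')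
    have hPQ : P = fun c : ℝ => 2 * μ₁ * ((1 + c ^ 3) ^ ((1 : ℝ) / 3)
        + (1 / 4) * (1 + c ^ 3) ^ (-(2 : ℝ) / 3))
        + 4 * μ₂ * (1 + c ^ 3) ^ ((1 : ℝ) / 3) := funext hP
    have hPd := ((hA.add (hB.const_mul (1 / 4 : ℝ))).const_mul (2 * μ₁)).add
        (hA.const_mul (4 * μ₂))
    rw [hPQ]
    rw [(show HasDerivAt (fun c : ℝ => 2 * μ₁ * ((1 + c ^ 3) ^ ((1 : ℝ) / 3)
        + (1 / 4) * (1 + c ^ 3) ^ (-(2 : ℝ) / 3))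
        + 4 * μ₂ * (1 + c ^ 3) ^ ((1 : ℝ) / 3)) _ c from hPd).deriv]
    set s : ℝ := (1 + c ^ 3) ^ (-(5 : ℝ) / 3) with hs
    have hspos : 0 < s := Real.rpow_pos_of_pos hu _
    have e1 : (1 + c ^ 3) ^ ((1 : ℝ) / 3 - 1) = (1 + c ^ 3) * s := by
      rw [show (1 : ℝ) / 3 - 1 = 1 + (-(5 : ℝ) / 3) by norm_num,
        Real.rpow_add hu, Real.rpow_one]
    have e2 : (1 + c ^ 3) ^ (-(2 : ℝ) / 3 - 1) = s := by
      rw [show -(2 : ℝ) / 3 - 1 = -(5 : ℝ) / 3 by norm_num]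
    rw [e1, e2]
    have hbr : (2 * μ₁ + 4 * μ₂) * (1 + c ^ 3) - μ₁ < 0 := by
      have h2 : c ^ 3 * (2 * (2 * μ - μ₁)) < 3 * μ₁ - 4 * μ :=
        (lt_div_iff₀ (by linarith)).mp hc3
      subst hμ
      nlinarith [h2]
    have hfac : 2 * μ₁ * (3 * c ^ 2 * ((1 : ℝ) / 3) * ((1 + c ^ 3) * s)
        + 1 / 4 * (3 * c ^ 2 * (-(2 : ℝ) / 3) * s))
        + 4 * μ₂ * (3 * c ^ 2 * ((1 : ℝ) / 3) * ((1 + c ^ 3) * s))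
        = c ^ 2 * s * ((2 * μ₁ + 4 * μ₂) * (1 + c ^ 3) - μ₁) := by ring
    rw [hfac]
    exact mul_neg_of_pos_of_neg (by positivity) hbr
  refine ⟨main, ?_⟩
  set T : ℝ := (3 * μ₁ - 4 * μ) / (2 * (2 * μ - μ₁)) with hT
  have hTpos : 0 < T := div_pos hn (by linarith)
  refine ⟨min 1 T, lt_min one_pos hTpos, fun c hc => ?_⟩
  have hc1 : c < 1 := lt_of_lt_of_le hc.2 (min_le_left _ _)
  have hcT : c < T := lt_of_lt_of_le hc.2 (min_le_right _ _)
  have hc3 : c ^ 3 < c := by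
    have h := mul_pos (mul_pos hc.1 (sub_pos.mpr hc1)) (show (0:ℝ) < 1 + c by linarith [hc.1])
    nlinarith [h]
  exact main c hc.1 (lt_trans hc3 hcT)
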